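/- For every coarsening parameter β > 1 and every n ≥ 2, setting q = 1 − 1/β ∈ (0,1), the n distinct points x_i = q^i (i = 0, …, n−1) on the real line, with spacing function Sp(x_i) defined as the distance from x_i to its nearest other point of the set, satisfy β(Sp(x_i) + Sp(x_j)) > |x_i − x_j| for every pair i ≠ j; hence the conflict graph G_C on these n points, whose edges are exactly the pairs violating the spacing condition, is the complete graph with n(n−1)/2 edges, of size quadratic in the number of vertices. -/

import Mathlib

open scoped Classical

/-- Nearest-neighbor spacing function for a family of points `pts : Fin n → ℝ`:
the distance from `pts i` to its nearest other point of the family. -/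
noncomputable def nnSp (n : ℕ) (pts : Fin n → ℝ) (i : Fin n) : ℝ :=
  sInf {r : ℝ | ∃ j : Fin n, j ≠ i ∧ r = dist (pts i) (pts j)}

/-- **The conflict graph can be quadratic in the number of vertices.**
For every coarsening parameter `β > 1` and every `n ≥ 2`, with `q = 1 - 1/β ∈ (0,1)`,
the `n` distinct points `x_i = q^i` (`i = 0, …, n-1`) on the real line, with nearest-neighbor
spacing function `Sp`, satisfy `β (Sp x_i + Sp x_j) > |x_i - x_j|` for every pair `i ≠ j`.
Hence the conflict graph `G_C` on these points, whose edges are exactly the pairs violating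
the spacing condition, is the complete graph with `n (n-1) / 2` edges, of size quadratic in
the number of vertices. -/
theorem conflict_graph_quadratic (β : ℝ) (hβ : 1 < β) (n : ℕ) (hn : 2 ≤ n)
    (q : ℝ) (hq : q = 1 - 1 / β)
    (pts : Fin n → ℝ) (hpts : ∀ i : Fin n, pts i = q ^ (i : ℕ)) :
    Function.Injective pts ∧
    (∀ i j : Fin n, i ≠ j →
        β * (nnSp n pts i + nnSp n pts j) > dist (pts i) (pts j)) ∧
    (Finset.univ.filter fun p : Sym2 (Fin n) =>
        ∃ i j : Fin n, p = s(i, j) ∧ i ≠ j ∧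
          β * (nnSp n pts i + nnSp n pts j) > dist (pts i) (pts j)).card
      = n * (n - 1) / 2 := by
  have hβ0 : 0 < β := lt_trans one_pos hβ
  have hb1 : (1:ℝ)/β < 1 := by rw [div_lt_one hβ0]; exact hβ
  have hb2 : (0:ℝ) < 1/β := by positivity
  have hq0 : 0 < q := by rw [hq]; linarith
  have hq1 : q < 1 := by rw [hq]; linarith
  -- monotone powers
  have hmono : ∀ a b : ℕ, a < b → q ^ b < q ^ a := fun a b hab =>
    pow_lt_pow_right_of_lt_one₀ hq0 hq1 hab
  -- injectivity
  have hinj : Function.Injective pts := by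
    intro i j hij
    rw [hpts i, hpts j] at hij
    by_contra h
    have hne : (i:ℕ) ≠ (j:ℕ) := fun hc => h (Fin.ext hc)
    rcases hne.lt_or_gt with h' | h'
    · exact absurd hij (ne_of_gt (hmono _ _ h'))
    · exact absurd hij (ne_of_lt (hmono _ _ h'))
  -- key power bound
  have hpow : ∀ a b : ℕ, a < b → q ^ a * (1 - q) ≤ q ^ a - q ^ b := by
    intro a b hab
    have h1 : q ^ b ≤ q ^ (a + 1) :=
      pow_le_pow_of_le_one hq0.le hq1.le hab
    have h2 : q ^ (a + 1) = q ^ a * q := pow_succ q a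
    nlinarith [pow_pos hq0 a]
  -- lower bound on nnSp
  have key : ∀ i : Fin n, q ^ (i:ℕ) * (1 - q) ≤ nnSp n pts i := by
    intro i
    apply le_csInf
    · obtain ⟨j, hj⟩ := Fintype.exists_ne_of_one_lt_card
        (by simpa using by omega : 1 < Fintype.card (Fin n)) i
      exact ⟨dist (pts i) (pts j), j, hj, rfl⟩
    · rintro r ⟨j, hji, rfl⟩
      rw [hpts i, hpts j, Real.dist_eq]
      have hne : (i:ℕ) ≠ (j:ℕ) := fun hc => hji (Fin.ext hc.symm)
      rcases hne.lt_or_gt with h' | h'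
      · have h1 := hpow _ _ h'
        have h2 := (hmono _ _ h').le
        rw [abs_of_nonneg (by linarith)]
        exact h1
      · have h1 := hpow _ _ h'
        have h2 := (hmono _ _ h').le
        have h3 : q ^ (i:ℕ) * (1 - q) ≤ q ^ (j:ℕ) * (1 - q) := by
          nlinarith
        rw [abs_of_nonpos (by linarith)]
        linarith
  have h1q : 1 - q = 1 / β := by rw [hq]; ring
  have hbq : β * (1 - q) = 1 := by rw [h1q]; field_simp
  -- main inequality
  have main : ∀ i j : Fin n, i ≠ j →
      β * (nnSp n pts i + nnSp n pts j) > dist (pts i) (pts j) := by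
    intro i j hij
    have hi := key i
    have hj := key j
    have hpi := pow_pos hq0 (i:ℕ)
    have hpj := pow_pos hq0 (j:ℕ)
    have hd : dist (pts i) (pts j) < q ^ (i:ℕ) + q ^ (j:ℕ) := by
      rw [hpts i, hpts j, Real.dist_eq, abs_sub_lt_iff]
      constructor <;> linarith
    have hb : q ^ (i:ℕ) + q ^ (j:ℕ) ≤ β * (nnSp n pts i + nnSp n pts j) := by
      nlinarith
    linarith
  refine ⟨hinj, main, ?_⟩
  have hset : (Finset.univ.filter fun p : Sym2 (Fin n) =>
        ∃ i j : Fin n, p = s(i, j) ∧ i ≠ j ∧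
          β * (nnSp n pts i + nnSp n pts j) > dist (pts i) (pts j))
      = (Finset.univ.filter fun p : Sym2 (Fin n) => ¬ p.IsDiag) := by
    apply Finset.filter_congr
    intro p _
    induction p using Sym2.inductionOn with
    | hf a b =>
      constructor
      · rintro ⟨i, j, hp, hij, -⟩
        rw [hp]
        simpa [Sym2.mk_isDiag_iff] using hij
      · intro hab
        have hab' : a ≠ b := by simpa [Sym2.mk_isDiag_iff] using hab
        exact ⟨a, b, rfl, hab', main a b hab'⟩
  rw [hset]
  have h1 : (Finset.univ.filter fun p : Sym2 (Fin n) => ¬ p.IsDiag).card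
      = Fintype.card {z : Sym2 (Fin n) // ¬ z.IsDiag} := by
    rw [Fintype.card_subtype]
  rw [h1, Sym2.card_subtype_not_diag, Fintype.card_fin, Nat.choose_two_right]
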